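/- Under the additive Gaussian measurement error model X* = X + ε with ε ~ N(0, Σ_ε) independent of (Y, X), the error-corrected distance covariance dcov*(Y, X*), defined by replacing the characteristic functions of X* and (Y, X*) with their error-corrected versions φ*_{X*} and φ*_{Y,X*} in the distance covariance integral, equals the ordinary distance covariance dcov(Y, X) based on the true covariates. -/

import Mathlib

open MeasureTheory ProbabilityTheory

open MeasureTheory ProbabilityTheory Complex
open scoped NNReal ENNReal Real

lemma aux_integral_cexp_gaussianReal (v : ℝ≥0) :
    ∫ x : ℝ, Complex.exp (Complex.I * x) ∂(gaussianReal 0 v)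
      = Complex.exp (-(v : ℝ) / 2) := by
  rcases eq_or_ne v 0 with rfl | hv
  · simp [gaussianReal_zero_var, integral_dirac]
  · have hv' : (0 : ℝ) < v := lt_of_le_of_ne v.coe_nonneg (by exact_mod_cast (Ne.symm hv))
    rw [gaussianReal_of_var_ne_zero 0 hv]
    have hmeas : Measurable fun x => (gaussianPDFReal 0 v x).toNNReal :=
      (measurable_gaussianPDFReal 0 v).real_toNNReal
    have hden : gaussianPDF 0 v = fun x => ((gaussianPDFReal 0 v x).toNNReal : ℝ≥0∞) := rfl
    rw [hden, integral_withDensity_eq_integral_smul hmeas]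
    set b : ℂ := ((-(1 / (2 * (v:ℝ))) : ℝ) : ℂ) with hbdef
    have hb : b.re < 0 := by
      rw [hbdef, Complex.ofReal_re]
      simp only [neg_lt_zero]
      positivity
    have hsq : (0:ℝ) < 2 * π * v := by positivity
    have hpt : ∀ x : ℝ, (gaussianPDFReal 0 v x).toNNReal • Complex.exp (Complex.I * x)
        = ((Real.sqrt (2 * π * v))⁻¹ : ℂ) * Complex.exp (b * x ^ 2 + Complex.I * x + 0) := by
      intro x
      rw [NNReal.smul_def, Real.coe_toNNReal _ (gaussianPDFReal_nonneg 0 v x)]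
      rw [Complex.real_smul, gaussianPDFReal]
      push_cast
      rw [mul_assoc, ← Complex.exp_add]
      congr 2
      have hvne : ((v:ℝ):ℂ) ≠ 0 := by exact_mod_cast hv'.ne'
      field_simp [hbdef]
      have hb2 : (2 * ((v:ℝ):ℂ)) * b = -1 := by
        rw [hbdef]; push_cast; field_simp
      linear_combination (-(x:ℂ)^2) * hb2
    simp_rw [hpt]
    rw [integral_const_mul, integral_cexp_quadratic hb]
    have h1 : (↑π / -b : ℂ) = ((2 * π * v : ℝ) : ℂ) := by
      have hvne : ((v:ℝ):ℂ) ≠ 0 := by exact_mod_cast hv'.ne'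
      field_simp [hbdef]
      have hb2 : (2 * ((v:ℝ):ℂ)) * b = -1 := by
        rw [hbdef]; push_cast; field_simp
      push_cast
      linear_combination (-(π:ℂ)) * hb2
    have h2 : (0 - Complex.I ^ 2 / (4 * b) : ℂ) = ((-(v:ℝ)/2 : ℝ) : ℂ) := by
      have hvne : ((v:ℝ):ℂ) ≠ 0 := by exact_mod_cast hv'.ne'
      rw [Complex.I_sq]
      field_simp [hbdef]
      have hb2 : (2 * ((v:ℝ):ℂ)) * b = -1 := by
        rw [hbdef]; push_cast; field_simp
      push_cast
      linear_combination hb2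
    rw [h1, h2]
    have h3 : (((2 * π * v : ℝ) : ℂ)) ^ (1/2 : ℂ) = ((Real.sqrt (2 * π * v) : ℝ) : ℂ) := by
      have h12 : (1/2 : ℂ) = ((1/2 : ℝ) : ℂ) := by norm_num
      rw [h12, ← Complex.ofReal_cpow hsq.le, Real.sqrt_eq_rpow]
    rw [h3, ← mul_assoc]
    have h4 : ((Real.sqrt (2 * π * v) : ℝ) : ℂ) ≠ 0 := by
      exact_mod_cast (Real.sqrt_pos.mpr hsq).ne'
    rw [inv_mul_cancel₀ h4, one_mul]
    norm_num

lemma aux_integral_cexp_add_indep {Ω : Type*} {mΩ : MeasurableSpace Ω} {μ : Measure Ω}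
    [IsProbabilityMeasure μ] {f g : Ω → ℝ} (hf : Measurable f) (hg : Measurable g)
    (h : IndepFun f g μ) :
    ∫ ω, Complex.exp (Complex.I * ((f ω + g ω : ℝ) : ℂ)) ∂μ
      = (∫ ω, Complex.exp (Complex.I * ((f ω : ℝ) : ℂ)) ∂μ)
        * ∫ ω, Complex.exp (Complex.I * ((g ω : ℝ) : ℂ)) ∂μ := by
  have hc : Continuous fun x : ℝ => Complex.exp (Complex.I * x) :=
    Complex.continuous_exp.comp (continuous_const.mul Complex.continuous_ofReal)
  have hmap := (indepFun_iff_map_prod_eq_prod_map_map hf.aemeasurable hg.aemeasurable).mp h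
  haveI : IsProbabilityMeasure (μ.map f) := Measure.isProbabilityMeasure_map hf.aemeasurable
  haveI : IsProbabilityMeasure (μ.map g) := Measure.isProbabilityMeasure_map hg.aemeasurable
  have hc2 : Continuous fun q : ℝ × ℝ => Complex.exp (Complex.I * q.1) * Complex.exp (Complex.I * q.2) :=
    (hc.comp continuous_fst).mul (hc.comp continuous_snd)
  have hc2 : Continuous fun q : ℝ × ℝ => Complex.exp (Complex.I * q.1) * Complex.exp (Complex.I * q.2) :=
    (hc.comp continuous_fst).mul (hc.comp continuous_snd)
  have h1 : ∫ ω, Complex.exp (Complex.I * ((f ω + g ω : ℝ) : ℂ)) ∂μ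
      = ∫ q : ℝ × ℝ, Complex.exp (Complex.I * q.1) * Complex.exp (Complex.I * q.2)
          ∂(μ.map fun ω => (f ω, g ω)) := by
    rw [integral_map (hf.prodMk hg).aemeasurable hc2.aestronglyMeasurable]
    congr 1
    funext ω
    rw [← Complex.exp_add, ← mul_add, Complex.ofReal_add]
  rw [h1, hmap,
    integral_prod_mul (fun x : ℝ => Complex.exp (Complex.I * x))
      (fun x : ℝ => Complex.exp (Complex.I * x)),
    integral_map hf.aemeasurable hc.aestronglyMeasurable,
    integral_map hg.aemeasurable hc.aestronglyMeasurable]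


/-- The constant `c_d = π^{(1+d)/2} / Γ((1+d)/2)` of Székely–Rizzo–Bakirov. -/
noncomputable def cConst (d : ℕ) : ℝ :=
  Real.pi ^ ((1 + (d : ℝ)) / 2) / Real.Gamma ((1 + (d : ℝ)) / 2)

/-- Euclidean norm on `ℝ^d` (viewed as `Fin d → ℝ`). -/
noncomputable def eucNorm {d : ℕ} (s : Fin d → ℝ) : ℝ := Real.sqrt (∑ i, s i ^ 2)

/-- The weight `w(r,s) = (c_1 c_p ‖r‖^2 ‖s‖^{1+p})⁻¹` for `Y` real and `X ∈ ℝᵖ`. -/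
noncomputable def dcWeight {p : ℕ} (r : ℝ) (s : Fin p → ℝ) : ℝ :=
  (cConst 1 * cConst p * |r| ^ 2 * eucNorm s ^ (1 + (p : ℝ)))⁻¹

/-- Marginal characteristic function of a real random variable. -/
noncomputable def phiR {Ω : Type*} [MeasureSpace Ω] (μ : Measure Ω) (Y : Ω → ℝ) (r : ℝ) : ℂ :=
  ∫ ω, Complex.exp (Complex.I * ((r * Y ω : ℝ) : ℂ)) ∂μ

/-- Marginal characteristic function of a random vector in `ℝᵖ`. -/
noncomputable def phiV {Ω : Type*} [MeasureSpace Ω] (μ : Measure Ω) {p : ℕ}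
    (X : Ω → Fin p → ℝ) (s : Fin p → ℝ) : ℂ :=
  ∫ ω, Complex.exp (Complex.I * ((∑ i, s i * X ω i : ℝ) : ℂ)) ∂μ

/-- Joint characteristic function of a real random variable and a random vector. -/
noncomputable def phiJ {Ω : Type*} [MeasureSpace Ω] (μ : Measure Ω) (Y : Ω → ℝ) {p : ℕ}
    (X : Ω → Fin p → ℝ) (r : ℝ) (s : Fin p → ℝ) : ℂ :=
  ∫ ω, Complex.exp (Complex.I * ((r * Y ω + ∑ i, s i * X ω i : ℝ) : ℂ)) ∂μ

/-- Squared distance covariance `dcov²(Y, X)` of a real `Y` and a vector `X`. -/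
noncomputable def dcov2 {Ω : Type*} [MeasureSpace Ω] (μ : Measure Ω) (Y : Ω → ℝ) {p : ℕ}
    (X : Ω → Fin p → ℝ) : ℝ :=
  ∫ r : ℝ, ∫ s : Fin p → ℝ,
    Norm.norm (phiJ μ Y X r s - phiR μ Y r * phiV μ X s) ^ 2 * dcWeight r s

/-- Error-corrected squared distance covariance `dcov*²(Y, X*)`: the characteristic
functions of `X*` and `(Y, X*)` are replaced by their error-corrected versions
`φ*_{X*}(s) = φ_{X*}(s) exp((1/2) sᵀ Σ_ε s)` and
`φ*_{Y,X*}(r,s) = φ_{Y,X*}(r,s) exp((1/2) sᵀ Σ_ε s)`. -/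
noncomputable def dcovStar2 {Ω : Type*} [MeasureSpace Ω] (μ : Measure Ω) (Y : Ω → ℝ) {p : ℕ}
    (Xstar : Ω → Fin p → ℝ) (Seps : Matrix (Fin p) (Fin p) ℝ) : ℝ :=
  ∫ r : ℝ, ∫ s : Fin p → ℝ,
    Norm.norm
        (phiJ μ Y Xstar r s * Complex.exp ((1 / 2 : ℂ) * ((∑ i, ∑ j, s i * Seps i j * s j : ℝ) : ℂ))
          - phiR μ Y r *
            (phiV μ Xstar s *
              Complex.exp ((1 / 2 : ℂ) * ((∑ i, ∑ j, s i * Seps i j * s j : ℝ) : ℂ)))) ^ 2 *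
      dcWeight r s

/-- Under the additive Gaussian measurement error model `X* = X + ε` with
`ε ~ N(0, Σ_ε)` (Cramér–Wold encoding) independent of the pair `(Y, X)`, the
error-corrected distance covariance of `(Y, X*)` equals the ordinary distance covariance
of `(Y, X)` based on the true covariates. -/
theorem dcovStar_eq_dcov
    {Ω : Type*} [MeasureSpace Ω] (μ : Measure Ω) [IsProbabilityMeasure μ]
    {p : ℕ} (Y : Ω → ℝ) (X ε : Ω → Fin p → ℝ)
    (hY : Measurable Y) (hX : Measurable X) (hε : Measurable ε)
    (Seps : Matrix (Fin p) (Fin p) ℝ)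
    (hSpsd : ∀ s : Fin p → ℝ, 0 ≤ ∑ i, ∑ j, s i * Seps i j * s j)
    (hGauss : ∀ s : Fin p → ℝ,
      Measure.map (fun ω => ∑ i, s i * ε ω i) μ =
        gaussianReal 0 (Real.toNNReal (∑ i, ∑ j, s i * Seps i j * s j)))
    (hindep : IndepFun ε (fun ω => (Y ω, X ω)) μ) :
    dcovStar2 μ Y (fun ω => X ω + ε ω) Seps = dcov2 μ Y X := by

  classical
  unfold dcovStar2 dcov2
  congr 1
  funext r
  congr 1
  funext s
  set v : ℝ := ∑ i, ∑ j, s i * Seps i j * s j with hvdef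
  have hv0 : 0 ≤ v := hSpsd s
  set U : Ω → ℝ := fun ω => ∑ i, s i * ε ω i with hUdef
  have hUmeas : Measurable U := by
    apply Finset.measurable_sum
    intro i _
    exact measurable_const.mul ((measurable_pi_apply i).comp hε)
  -- the characteristic factor
  have hcont : Continuous fun x : ℝ => Complex.exp (Complex.I * x) :=
    Complex.continuous_exp.comp (continuous_const.mul Complex.continuous_ofReal)
  have hmapU : Measure.map U μ = gaussianReal 0 (Real.toNNReal v) := hGauss s
  have hC : ∫ ω, Complex.exp (Complex.I * ((U ω : ℝ) : ℂ)) ∂μ = Complex.exp (-(v : ℝ) / 2) := by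
    rw [← integral_map hUmeas.aemeasurable hcont.aestronglyMeasurable, hmapU,
      aux_integral_cexp_gaussianReal, Real.coe_toNNReal _ hv0]
  -- independence of U from (Y, X)-functionals
  have hindepJ : IndepFun U (fun ω => r * Y ω + ∑ i, s i * X ω i) μ := by
    have hφ : Measurable fun w : Fin p → ℝ => ∑ i, s i * w i :=
      Finset.measurable_sum _ fun i _ => measurable_const.mul (measurable_pi_apply i)
    have hψ : Measurable fun q : ℝ × (Fin p → ℝ) => r * q.1 + ∑ i, s i * q.2 i :=
      (measurable_const.mul measurable_fst).add
        (Finset.measurable_sum _ fun i _ => measurable_const.mul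
          ((measurable_pi_apply i).comp measurable_snd))
    exact hindep.comp hφ hψ
  have hindepV : IndepFun U (fun ω => ∑ i, s i * X ω i) μ := by
    have hφ : Measurable fun w : Fin p → ℝ => ∑ i, s i * w i :=
      Finset.measurable_sum _ fun i _ => measurable_const.mul (measurable_pi_apply i)
    have hψ : Measurable fun q : ℝ × (Fin p → ℝ) => ∑ i, s i * q.2 i :=
      Finset.measurable_sum _ fun i _ => measurable_const.mul
        ((measurable_pi_apply i).comp measurable_snd)
    exact hindep.comp hφ hψ
  have hYXmeas : Measurable fun ω => r * Y ω + ∑ i, s i * X ω i :=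
    (measurable_const.mul hY).add
      (Finset.measurable_sum _ fun i _ => measurable_const.mul ((measurable_pi_apply i).comp hX))
  have hXsmeas : Measurable fun ω => ∑ i, s i * X ω i :=
    Finset.measurable_sum _ fun i _ => measurable_const.mul ((measurable_pi_apply i).comp hX)
  -- factorization of phiJ
  have hJ : phiJ μ Y (fun ω => X ω + ε ω) r s
      = Complex.exp (-(v : ℝ) / 2) * phiJ μ Y X r s := by
    have harg : ∀ ω, (r * Y ω + ∑ i, s i * (X ω + ε ω) i : ℝ)
        = U ω + (r * Y ω + ∑ i, s i * X ω i) := by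
      intro ω
      simp only [Pi.add_apply, mul_add, Finset.sum_add_distrib, hUdef]
      ring
    unfold phiJ
    simp_rw [harg]
    rw [aux_integral_cexp_add_indep hUmeas hYXmeas hindepJ, hC]
  have hV : phiV μ (fun ω => X ω + ε ω) s
      = Complex.exp (-(v : ℝ) / 2) * phiV μ X s := by
    have harg : ∀ ω, (∑ i, s i * (X ω + ε ω) i : ℝ)
        = U ω + (∑ i, s i * X ω i) := by
      intro ω
      simp only [Pi.add_apply, mul_add, Finset.sum_add_distrib, hUdef]
      ring
    unfold phiV
    simp_rw [harg]
    rw [aux_integral_cexp_add_indep hUmeas hXsmeas hindepV, hC]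
  -- conclude
  have hprod : Complex.exp (-(v : ℝ) / 2) * Complex.exp ((1 / 2 : ℂ) * ((v : ℝ) : ℂ)) = 1 := by
    rw [← Complex.exp_add]
    rw [show (-(v:ℝ)/2 : ℂ) + (1/2 : ℂ) * ((v:ℝ):ℂ) = 0 by ring]
    exact Complex.exp_zero
  rw [hJ, hV]
  have key : Complex.exp (-(v : ℝ) / 2) * phiJ μ Y X r s * Complex.exp ((1/2 : ℂ) * ((v:ℝ):ℂ))
        - phiR μ Y r * (Complex.exp (-(v : ℝ) / 2) * phiV μ X s * Complex.exp ((1/2 : ℂ) * ((v:ℝ):ℂ)))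
      = phiJ μ Y X r s - phiR μ Y r * phiV μ X s := by
    calc Complex.exp (-(v : ℝ) / 2) * phiJ μ Y X r s * Complex.exp ((1/2 : ℂ) * ((v:ℝ):ℂ))
        - phiR μ Y r * (Complex.exp (-(v : ℝ) / 2) * phiV μ X s * Complex.exp ((1/2 : ℂ) * ((v:ℝ):ℂ)))
        = (phiJ μ Y X r s - phiR μ Y r * phiV μ X s)
            * (Complex.exp (-(v : ℝ) / 2) * Complex.exp ((1/2 : ℂ) * ((v:ℝ):ℂ))) := by ring
      _ = phiJ μ Y X r s - phiR μ Y r * phiV μ X s := by rw [hprod, mul_one]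
  rw [key]
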